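/- Suppose f : ℕ≥1 → ℂ is a multiplicative function, k is a natural number, and χ : ℕ≥1 → ℂ is a periodic multiplicative function that is not identically zero, such that f(n) = n^k · χ(n) for all sufficiently large n. Then f(n) = n^k · χ(n) for all n ≥ 1. -/

import Mathlib

/-- Strip from `m` all prime factors shared with `n`, keeping `χ` nonzero. -/
lemma exists_coprime_chi_ne_zero (χ : ℕ → ℂ)
    (hχmul : ∀ m n : ℕ, 0 < m → 0 < n → Nat.Coprime m n → χ (m * n) = χ m * χ n)
    (n : ℕ) :
    ∀ m : ℕ, 0 < m → χ m ≠ 0 → ∃ v : ℕ, 0 < v ∧ χ v ≠ 0 ∧ Nat.Coprime v n := by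
  intro m
  induction m using Nat.strong_induction_on with
  | _ m ih =>
    intro hm hχm
    by_cases hcop : Nat.Coprime m n
    · exact ⟨m, hm, hχm, hcop⟩
    · have hg1 : Nat.gcd m n ≠ 1 := hcop
      obtain ⟨p, hp, hpg⟩ := Nat.exists_prime_and_dvd hg1
      have hpm : p ∣ m := hpg.trans (Nat.gcd_dvd_left m n)
      set a := m.factorization p with ha_def
      have ha : 0 < a := by
        rw [ha_def]
        exact Nat.Prime.factorization_pos_of_dvd hp hm.ne' hpm
      have hsplit : p ^ a * (m / p ^ a) = m := Nat.ordProj_mul_ordCompl_eq_self m p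
      have hrpos : 0 < m / p ^ a := Nat.ordCompl_pos p hm.ne'
      have hcop' : Nat.Coprime (p ^ a) (m / p ^ a) :=
        Nat.Coprime.pow_left a (Nat.coprime_ordCompl hp hm.ne')
      have hχsplit : χ m = χ (p ^ a) * χ (m / p ^ a) := by
        have h := hχmul _ _ (pow_pos hp.pos a) hrpos hcop'
        rwa [hsplit] at h
      have hχr : χ (m / p ^ a) ≠ 0 := by
        intro h; rw [hχsplit, h, mul_zero] at hχm; exact hχm rfl
      have hlt : m / p ^ a < m := by
        have h2 : 2 ≤ p ^ a := hp.two_le.trans (Nat.le_self_pow ha.ne' p)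
        nlinarith [hrpos, hsplit]
      exact ih _ hlt hrpos hχr

/-- If `f : ℕ≥1 → ℂ` is multiplicative, `k : ℕ`, and `χ` is a periodic
multiplicative function, not identically zero, such that `f(n) = n^k χ(n)` for all
sufficiently large `n`, then `f(n) = n^k χ(n)` for all `n ≥ 1`. -/
theorem eventually_eq_implies_eq_of_multiplicative
    (f : ℕ → ℂ) (k : ℕ) (χ : ℕ → ℂ)
    (hf1 : f 1 = 1)
    (hfmul : ∀ m n : ℕ, 0 < m → 0 < n → Nat.Coprime m n → f (m * n) = f m * f n)
    (hχ1 : χ 1 = 1)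
    (hχmul : ∀ m n : ℕ, 0 < m → 0 < n → Nat.Coprime m n → χ (m * n) = χ m * χ n)
    (hχper : ∃ d : ℕ, 1 ≤ d ∧ ∀ n : ℕ, 1 ≤ n → χ (n + d) = χ n)
    (hχne : ∃ m : ℕ, 1 ≤ m ∧ χ m ≠ 0)
    (hev : ∃ N : ℕ, ∀ n : ℕ, N ≤ n → f n = (n : ℂ) ^ k * χ n) :
    ∀ n : ℕ, 1 ≤ n → f n = (n : ℂ) ^ k * χ n := by
  obtain ⟨d, hd, hper⟩ := hχper
  obtain ⟨m₀, hm₀, hχm₀⟩ := hχne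
  obtain ⟨N, hN⟩ := hev
  -- iterated periodicity
  have hper' : ∀ j : ℕ, ∀ x : ℕ, 1 ≤ x → χ (x + j * d) = χ x := by
    intro j
    induction j with
    | zero => intro x hx; simp
    | succ j ihj =>
      intro x hx
      have : x + (j + 1) * d = (x + j * d) + d := by ring
      rw [this, hper _ (by omega), ihj x hx]
  intro n hn
  obtain ⟨v, hv, hχv, hvn⟩ := exists_coprime_chi_ne_zero χ hχmul n m₀ hm₀ hχm₀
  set m := v + (N * n) * d with hm_def
  have hmpos : 0 < m := by omega
  have hχm : χ m = χ v := hper' (N * n) v hv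
  have hmn : Nat.Coprime m n := by
    have : m = v + (N * d) * n := by rw [hm_def]; ring
    rw [this]
    exact (Nat.coprime_add_mul_right_left v n (N * d)).mpr hvn
  have hmN : N ≤ m := by
    have : N * 1 ≤ N * n * d := by
      calc N * 1 ≤ N * n := Nat.mul_le_mul_left N hn
      _ = N * n * 1 := by ring
      _ ≤ N * n * d := Nat.mul_le_mul_left _ hd
    omega
  have hnmN : N ≤ n * m := le_trans hmN (Nat.le_mul_of_pos_left m hn)
  have h1 : f (n * m) = f n * f m := hfmul n m hn hmpos hmn.symm
  have h2 : f (n * m) = ((n * m : ℕ) : ℂ) ^ k * χ (n * m) := hN _ hnmN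
  have h3 : χ (n * m) = χ n * χ m := hχmul n m hn hmpos hmn.symm
  have h4 : f m = (m : ℂ) ^ k * χ m := hN m hmN
  have hmne : ((m : ℂ)) ^ k * χ m ≠ 0 := by
    apply mul_ne_zero
    · exact pow_ne_zero k (Nat.cast_ne_zero.mpr hmpos.ne')
    · rw [hχm]; exact hχv
  have key : f n * ((m : ℂ) ^ k * χ m) = ((n : ℂ) ^ k * χ n) * ((m : ℂ) ^ k * χ m) := by
    calc f n * ((m : ℂ) ^ k * χ m) = f n * f m := by rw [h4]
    _ = f (n * m) := h1.symm
    _ = ((n * m : ℕ) : ℂ) ^ k * (χ n * χ m) := by rw [h2, h3]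
    _ = ((n : ℂ) ^ k * χ n) * ((m : ℂ) ^ k * χ m) := by push_cast; ring
  exact mul_right_cancel₀ hmne key
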